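/- Let G = (V, E) be a finite simple graph whose vertex set is partitioned into clusters V₁,…,V_P, with P available colors, and let x : V × {1,…,P} → ℝ and y : {1,…,P} → ℝ take values in {0,1}. Define the unit penalty Pen(x,y) = Σ_{p=1}^P (1 − Σ_{i∈V_p} Σ_{k=1}^P x_{ik})² + Σ_{{i,j}∈E} Σ_{k=1}^P x_{ik} x_{jk} + Σ_{i∈V} Σ_{k=1}^P (x_{ik} − y_k) x_{ik}. Then Pen(x,y) ≥ 0 for all binary (x,y); Pen(x,y) = 0 if and only if (x,y) satisfies the Sel-Col constraints (exactly one selected-and-colored vertex per cluster, no monochromatic edge, and x_{ik} ≤ y_k for all i and k); and if (x,y) violates any of these constraints then Pen(x,y) ≥ 1. -/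

import Mathlib

/-- The Sel-Col unit penalty
`Pen(x,y) = Σ_p (1 − Σ_{i∈V_p} Σ_k x_{ik})² + Σ_{{i,j}∈E} Σ_k x_{ik} x_{jk}
            + Σ_i Σ_k (x_{ik} − y_k) x_{ik}`. -/
noncomputable def selColPen {V : Type*} [Fintype V] [DecidableEq V] (G : SimpleGraph V)
    [DecidableRel G.Adj] {P : ℕ} (Vp : Fin P → Finset V)
    (x : V → Fin P → ℝ) (y : Fin P → ℝ) : ℝ :=
  (∑ p, (1 - ∑ i ∈ Vp p, ∑ k, x i k) ^ 2)
    + (∑ e ∈ G.edgeFinset, ∑ k,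
        Sym2.lift ⟨fun i j => x i k * x j k, fun i j => mul_comm (x i k) (x j k)⟩ e)
    + ∑ i, ∑ k, (x i k - y k) * x i k

/-- The Sel-Col constraints: exactly one selected-and-colored vertex per cluster, no
monochromatic edge, and `x_{ik} ≤ y_k` for all i, k. -/
def selColFeasible {V : Type*} (G : SimpleGraph V) {P : ℕ} (Vp : Fin P → Finset V)
    (x : V → Fin P → ℝ) (y : Fin P → ℝ) : Prop :=
  (∀ p, ∑ i ∈ Vp p, ∑ k, x i k = 1) ∧
    (∀ i j, G.Adj i j → ∀ k, x i k + x j k ≤ 1) ∧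
    (∀ i k, x i k ≤ y k)

private lemma sum_nat_of_pointwise {ι : Type*} (s : Finset ι) (f : ι → ℝ)
    (h : ∀ a ∈ s, ∃ n : ℕ, f a = n) : ∃ n : ℕ, ∑ a ∈ s, f a = n := by
  classical
  induction s using Finset.induction_on with
  | empty => exact ⟨0, by simp⟩
  | insert a s ha ih =>
      obtain ⟨m, hm⟩ := h _ (Finset.mem_insert_self _ _)
      obtain ⟨n, hn⟩ := ih fun a haa => h a (Finset.mem_insert_of_mem haa)
      exact ⟨m + n, by rw [Finset.sum_insert ha, hm, hn]; push_cast; ring⟩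

/-- For binary (x, y), the Sel-Col unit penalty is nonnegative; it vanishes
exactly when (x, y) satisfies the Sel-Col constraints; and it is at least 1 whenever some
constraint is violated. -/
theorem selcol_penalty_properties {V : Type*} [Fintype V] [DecidableEq V]
    (G : SimpleGraph V) [DecidableRel G.Adj] {P : ℕ} (Vp : Fin P → Finset V)
    (hdisj : ∀ p q, p ≠ q → Disjoint (Vp p) (Vp q))
    (hcover : ∀ v : V, ∃ p, v ∈ Vp p)
    (x : V → Fin P → ℝ) (y : Fin P → ℝ)
    (hx : ∀ i k, x i k = 0 ∨ x i k = 1) (hy : ∀ k, y k = 0 ∨ y k = 1) :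
    0 ≤ selColPen G Vp x y ∧
      (selColPen G Vp x y = 0 ↔ selColFeasible G Vp x y) ∧
      (¬ selColFeasible G Vp x y → 1 ≤ selColPen G Vp x y) := by
  classical
  have hx0 : ∀ i k, 0 ≤ x i k := fun i k => by rcases hx i k with h | h <;> simp [h]
  have hlift : ∀ (k : Fin P) (e : Sym2 V),
      0 ≤ Sym2.lift ⟨fun i j => x i k * x j k, fun i j => mul_comm (x i k) (x j k)⟩ e := by
    intro k e
    induction e using Sym2.ind with
    | _ i j => simpa using mul_nonneg (hx0 i k) (hx0 j k)
  set A := (∑ p, (1 - ∑ i ∈ Vp p, ∑ k, x i k) ^ 2) with hAdef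
  set B := (∑ e ∈ G.edgeFinset, ∑ k,
      Sym2.lift ⟨fun i j => x i k * x j k, fun i j => mul_comm (x i k) (x j k)⟩ e) with hBdef
  set C := (∑ i, ∑ k, (x i k - y k) * x i k) with hCdef
  have hPen : selColPen G Vp x y = A + B + C := rfl
  have hA0 : 0 ≤ A := Finset.sum_nonneg fun p _ => sq_nonneg _
  have hB0 : 0 ≤ B := Finset.sum_nonneg fun e _ => Finset.sum_nonneg fun k _ => hlift k e
  have hc01 : ∀ i k, (x i k - y k) * x i k = 0 ∨ (x i k - y k) * x i k = 1 := by
    intro i k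
    rcases hx i k with h | h <;> rcases hy k with h' | h' <;> simp [h, h']
  have hc0 : ∀ i k, 0 ≤ (x i k - y k) * x i k := fun i k => by
    rcases hc01 i k with h | h <;> simp [h]
  have hC0 : 0 ≤ C := Finset.sum_nonneg fun i _ => Finset.sum_nonneg fun k _ => hc0 i k
  have hSnat : ∀ p, ∃ n : ℕ, (∑ i ∈ Vp p, ∑ k, x i k) = n := by
    intro p
    refine sum_nat_of_pointwise _ _ fun i _ => ?_
    refine sum_nat_of_pointwise _ _ fun k _ => ?_
    rcases hx i k with h | h
    · exact ⟨0, by simp [h]⟩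
    · exact ⟨1, by simp [h]⟩
  have hAterm : ∀ p, (∑ i ∈ Vp p, ∑ k, x i k) ≠ 1 →
      1 ≤ (1 - ∑ i ∈ Vp p, ∑ k, x i k) ^ 2 := by
    intro p hne
    obtain ⟨n, hn⟩ := hSnat p
    have hn1 : n ≠ 1 := by rintro rfl; exact hne (by simpa using hn)
    have hcases : n = 0 ∨ 2 ≤ n := by omega
    rcases hcases with h0 | h2
    · rw [hn, h0]; norm_num
    · have h2' : (2 : ℝ) ≤ (∑ i ∈ Vp p, ∑ k, x i k) := by
        rw [hn]; exact_mod_cast h2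
      nlinarith
  refine ⟨by rw [hPen]; linarith, ?_, ?_⟩
  · constructor
    · intro h0
      rw [hPen] at h0
      have hAz : A = 0 := le_antisymm (by linarith) hA0
      have hBz : B = 0 := le_antisymm (by linarith) hB0
      have hCz : C = 0 := le_antisymm (by linarith) hC0
      refine ⟨?_, ?_, ?_⟩
      · intro p
        have hp : (1 - ∑ i ∈ Vp p, ∑ k, x i k) ^ 2 = 0 :=
          (Finset.sum_eq_zero_iff_of_nonneg fun q _ => sq_nonneg _).1 hAz p (Finset.mem_univ p)
        have hz := pow_eq_zero_iff (n := 2) (by norm_num) |>.1 hp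
        linarith [sub_eq_zero.1 hz]
      · intro i j hadj k
        have he : s(i, j) ∈ G.edgeFinset := by
          simp [SimpleGraph.mem_edgeFinset, hadj]
        have hinner := (Finset.sum_eq_zero_iff_of_nonneg
          fun e _ => Finset.sum_nonneg fun k _ => hlift k e).1 hBz _ he
        have hterm := (Finset.sum_eq_zero_iff_of_nonneg
          fun k _ => hlift k _).1 hinner k (Finset.mem_univ k)
        simp only [Sym2.lift_mk] at hterm
        rcases hx i k with h | h <;> rcases hx j k with h' | h' <;> rw [h, h']
        · norm_num
        · norm_num
        · norm_num
        · rw [h, h'] at hterm; norm_num at hterm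
      · intro i k
        have hinner := (Finset.sum_eq_zero_iff_of_nonneg
          fun i _ => Finset.sum_nonneg fun k _ => hc0 i k).1 hCz i (Finset.mem_univ i)
        have hterm := (Finset.sum_eq_zero_iff_of_nonneg
          fun k _ => hc0 i k).1 hinner k (Finset.mem_univ k)
        rcases hx i k with h | h
        · rw [h]; rcases hy k with h' | h' <;> rw [h'] <;> norm_num
        · rw [h] at hterm ⊢
          rcases hy k with h' | h'
          · rw [h'] at hterm; norm_num at hterm
          · rw [h']
    · rintro ⟨h1, h2, h3⟩
      have hAz : A = 0 := Finset.sum_eq_zero fun p _ => by rw [h1 p]; ring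
      have hBz : B = 0 := by
        refine Finset.sum_eq_zero fun e he => ?_
        induction e using Sym2.ind with
        | _ i j =>
          have hadj : G.Adj i j := by
            rw [SimpleGraph.mem_edgeFinset] at he
            exact he
          refine Finset.sum_eq_zero fun k _ => ?_
          have hsum := h2 i j hadj k
          simp only [Sym2.lift_mk]
          rcases hx i k with h | h
          · rw [h]; ring
          · rcases hx j k with h' | h'
            · rw [h']; ring
            · rw [h, h'] at hsum; norm_num at hsum
      have hCz : C = 0 := by
        refine Finset.sum_eq_zero fun i _ => Finset.sum_eq_zero fun k _ => ?_
        rcases hx i k with h | h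
        · rw [h]; ring
        · have := h3 i k
          rw [h] at this
          rcases hy k with h' | h'
          · rw [h'] at this; norm_num at this
          · rw [h, h']; ring
      rw [hPen, hAz, hBz, hCz]; ring
  · intro hnf
    rw [hPen]
    by_cases h1 : ∀ p, ∑ i ∈ Vp p, ∑ k, x i k = 1
    · by_cases h2 : ∀ i j, G.Adj i j → ∀ k, x i k + x j k ≤ 1
      · by_cases h3 : ∀ i k, x i k ≤ y k
        · exact absurd ⟨h1, h2, h3⟩ hnf
        · push_neg at h3
          obtain ⟨i, k, hik⟩ := h3
          have hx1 : x i k = 1 := by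
            rcases hx i k with h | h
            · exfalso; rcases hy k with h' | h' <;> rw [h, h'] at hik <;> norm_num at hik
            · exact h
          have hy0 : y k = 0 := by
            rcases hy k with h | h
            · exact h
            · exfalso; rw [hx1, h] at hik; exact lt_irrefl 1 hik
          have hcik : (x i k - y k) * x i k = 1 := by rw [hx1, hy0]; ring
          have hrow : 1 ≤ ∑ k', (x i k' - y k') * x i k' := by
            calc (1 : ℝ) = (x i k - y k) * x i k := hcik.symm
            _ ≤ ∑ k', (x i k' - y k') * x i k' :=
              Finset.single_le_sum (fun k' _ => hc0 i k') (Finset.mem_univ k)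
          have hC1 : 1 ≤ C :=
            le_trans hrow (Finset.single_le_sum
              (fun i' _ => Finset.sum_nonneg fun k' _ => hc0 i' k') (Finset.mem_univ i))
          linarith
      · push_neg at h2
        obtain ⟨i, j, hadj, k, hik⟩ := h2
        have hx1 : x i k = 1 := by
          rcases hx i k with h | h
          · exfalso; rw [h] at hik
            rcases hx j k with h' | h' <;> rw [h'] at hik <;> norm_num at hik
          · exact h
        have hx2 : x j k = 1 := by
          rcases hx j k with h | h
          · exfalso; rw [hx1, h] at hik; norm_num at hik
          · exact h
        have he : s(i, j) ∈ G.edgeFinset := by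
          simp [SimpleGraph.mem_edgeFinset, hadj]
        have hterm : Sym2.lift ⟨fun a b => x a k * x b k,
            fun a b => mul_comm (x a k) (x b k)⟩ s(i, j) = 1 := by
          simp [Sym2.lift_mk, hx1, hx2]
        have hrow : 1 ≤ ∑ k', Sym2.lift ⟨fun a b => x a k' * x b k',
            fun a b => mul_comm (x a k') (x b k')⟩ s(i, j) := by
          calc (1 : ℝ) = _ := hterm.symm
          _ ≤ _ := Finset.single_le_sum (fun k' _ => hlift k' _) (Finset.mem_univ k)
        have hB1 : 1 ≤ B :=
          le_trans hrow (Finset.single_le_sum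
            (fun e _ => Finset.sum_nonneg fun k' _ => hlift k' e) he)
        linarith
    · push_neg at h1
      obtain ⟨p, hp⟩ := h1
      have hA1 : 1 ≤ A := by
        rw [hAdef]
        exact le_trans (hAterm p hp)
          (Finset.single_le_sum (f := fun q => (1 - ∑ i ∈ Vp q, ∑ k, x i k) ^ 2)
            (fun q _ => sq_nonneg _) (Finset.mem_univ p))
      linarith
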